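/- For all ν ∈ ℂ with ν ≠ -1/2, ∫_{-1}^{1} P_ν(ξ) P_ν(-ξ) dξ = 2 cos(νπ)/(2ν+1). -/

import Mathlib

open Filter MeasureTheory Real

/-- Legendre function of the first kind of complex degree `ν` on `(-1, 1)`,
defined via the Mehler--Dirichlet integral. -/
noncomputable def legendreP (ν : ℂ) (x : ℝ) : ℂ :=
  (2 / (π : ℂ)) * ∫ β in (0 : ℝ)..(Real.arccos x),
    Complex.cos ((2 * ν + 1) * (β : ℂ) / 2) / ((Real.sqrt (2 * (Real.cos β - x)) : ℝ) : ℂ)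


section MehlerAux
open Set


lemma sqrt_deriv_aux {a b : ℝ} (hab : b < a) {x : ℝ} (hx : x ∈ Ioo b a) :
    HasDerivAt (fun ξ => Real.arcsin ((2*ξ - a - b)/(a-b)))
      ((Real.sqrt (a - x))⁻¹ * (Real.sqrt (x - b))⁻¹) x := by
  have hd : (0:ℝ) < a - b := by linarith [hx.1, hx.2]
  have hu : HasDerivAt (fun ξ : ℝ => (2*ξ - a - b)/(a-b)) (2/(a-b)) x := by
    have h1 : HasDerivAt (fun ξ : ℝ => 2*ξ - a - b) (2:ℝ) x := by
      simpa using (((hasDerivAt_id x).const_mul (2:ℝ)).sub_const a).sub_const b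
    exact h1.div_const (a-b)
  set u : ℝ := (2*x - a - b)/(a-b) with hu_def
  have hax : 0 < a - x := by linarith [hx.2]
  have hxb : 0 < x - b := by linarith [hx.1]
  have hu1 : u < 1 := by
    rw [hu_def, div_lt_one hd]; linarith
  have hu2 : -1 < u := by
    rw [hu_def, lt_div_iff₀ hd]; linarith
  have harc := Real.hasDerivAt_arcsin (ne_of_gt hu2) (ne_of_lt hu1)
  have hcomp := harc.comp x hu
  refine hcomp.congr_deriv ?_
  have hsq : 1 - u^2 = (2 * Real.sqrt (a-x) * Real.sqrt (x-b) / (a-b))^2 := by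
    have e1 : Real.sqrt (a-x) ^ 2 = a - x := Real.sq_sqrt hax.le
    have e2 : Real.sqrt (x-b) ^ 2 = x - b := Real.sq_sqrt hxb.le
    rw [hu_def]
    field_simp
    rw [e1, e2]
    ring
  have hpos : 0 < 2 * Real.sqrt (a-x) * Real.sqrt (x-b) / (a-b) := by
    positivity
  rw [hsq, Real.sqrt_sq hpos.le]
  have h1 : Real.sqrt (a-x) ≠ 0 := by positivity
  have h2 : Real.sqrt (x-b) ≠ 0 := by positivity
  field_simp

lemma sqrt_integrable {a b : ℝ} (hab : b < a) :
    IntegrableOn (fun ξ => (Real.sqrt (a - ξ))⁻¹ * (Real.sqrt (ξ - b))⁻¹) (Ioc b a) := by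
  have hcont : Continuous fun ξ : ℝ => Real.arcsin ((2*ξ - a - b)/(a-b)) :=
    Real.continuous_arcsin.comp (by fun_prop)
  apply intervalIntegral.integrableOn_deriv_of_nonneg hcont.continuousOn
    (fun x hx => sqrt_deriv_aux hab hx)
  intro x hx; positivity

lemma sqrt_integral {a b : ℝ} (hab : b < a) :
    ∫ ξ in Ioc b a, (Real.sqrt (a - ξ))⁻¹ * (Real.sqrt (ξ - b))⁻¹ = π := by
  have h := intervalIntegral.integral_eq_sub_of_hasDeriv_right_of_le hab.le
    (f := fun ξ => Real.arcsin ((2*ξ - a - b)/(a-b)))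
    (f' := fun ξ => (Real.sqrt (a - ξ))⁻¹ * (Real.sqrt (ξ - b))⁻¹)
    ((by exact Real.continuous_arcsin.comp (by fun_prop) : Continuous fun ξ : ℝ => Real.arcsin ((2*ξ - a - b)/(a-b))).continuousOn)
    (fun x hx => (sqrt_deriv_aux hab hx).hasDerivWithinAt)
    ((intervalIntegrable_iff_integrableOn_Ioc_of_le hab.le).2 (sqrt_integrable hab))
  have hd : a - b ≠ 0 := by linarith
  rw [intervalIntegral.integral_of_le hab.le] at h
  rw [h]
  have e1 : (2*a - a - b)/(a-b) = 1 := by field_simp; ring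
  have e2 : (2*b - a - b)/(a-b) = -1 := by field_simp; ring
  simp only [e1, e2, Real.arcsin_one, Real.arcsin_neg_one]; ring

noncomputable def kk (y x : ℝ) : ℝ := (Real.sqrt (2*(Real.cos y - x)))⁻¹

lemma kk_nonneg (y x : ℝ) : 0 ≤ kk y x := by unfold kk; positivity

lemma kk_mul (y z ξ : ℝ) : kk y ξ * kk z (-ξ)
    = 2⁻¹ * ((Real.sqrt (Real.cos y - ξ))⁻¹ * (Real.sqrt (ξ - -Real.cos z))⁻¹) := by
  unfold kk
  rw [Real.sqrt_mul (by norm_num), Real.sqrt_mul (by norm_num), mul_inv, mul_inv]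
  have h2 : (Real.sqrt 2)⁻¹ * (Real.sqrt 2)⁻¹ = 2⁻¹ := by
    rw [← mul_inv, Real.mul_self_sqrt (by norm_num)]
  have e : Real.cos z - -ξ = ξ - -Real.cos z := by ring
  rw [e]; ring_nf
  rw [sq, h2]; ring

lemma kk_integrableOn {y z : ℝ} (h : -Real.cos z < Real.cos y) :
    IntegrableOn (fun ξ => kk y ξ * kk z (-ξ)) (Ioo (-Real.cos z) (Real.cos y)) := by
  simp_rw [kk_mul]
  exact (((sqrt_integrable h).mono_set Ioo_subset_Ioc_self).const_mul _)

lemma kk_setIntegral {y z : ℝ} (h : -Real.cos z < Real.cos y) :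
    ∫ ξ in Ioo (-Real.cos z) (Real.cos y), kk y ξ * kk z (-ξ) = π/2 := by
  rw [← integral_Ioc_eq_integral_Ioo]
  simp_rw [kk_mul]
  rw [MeasureTheory.integral_const_mul, sqrt_integral h]
  ring

lemma kk_lintegral {y z : ℝ} (h : -Real.cos z < Real.cos y) :
    ∫⁻ ξ in Ioo (-Real.cos z) (Real.cos y), ENNReal.ofReal (kk y ξ * kk z (-ξ)) 
      = ENNReal.ofReal (π/2) := by
  rw [← MeasureTheory.ofReal_integral_eq_lintegral_ofReal (kk_integrableOn h)
    (Filter.Eventually.of_forall fun ξ => mul_nonneg (kk_nonneg _ _) (kk_nonneg _ _)),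
    kk_setIntegral h]

noncomputable def cc (ν : ℂ) (y : ℝ) : ℂ := Complex.cos ((2*ν+1) * (y:ℂ) / 2)

def SS : Set (ℝ × ℝ × ℝ) :=
  {q | (0 < q.2.1 ∧ q.2.1 < π) ∧ (0 < q.2.2 ∧ q.2.2 < π) ∧
    (-Real.cos q.2.2 < q.1 ∧ q.1 < Real.cos q.2.1)}

lemma measurableSet_SS : MeasurableSet SS := by
  apply MeasurableSet.inter
  · exact (measurableSet_lt measurable_const (measurable_fst.comp measurable_snd)).inter
      (measurableSet_lt (measurable_fst.comp measurable_snd) measurable_const)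
  apply MeasurableSet.inter
  · exact (measurableSet_lt measurable_const (measurable_snd.comp measurable_snd)).inter
      (measurableSet_lt (measurable_snd.comp measurable_snd) measurable_const)
  · exact (measurableSet_lt ((Real.continuous_cos.measurable.comp
      (measurable_snd.comp measurable_snd)).neg) measurable_fst).inter
      (measurableSet_lt measurable_fst (Real.continuous_cos.measurable.comp
        (measurable_fst.comp measurable_snd)))

noncomputable def FF (ν : ℂ) : ℝ × ℝ × ℝ → ℂ :=
  SS.indicator fun q => (cc ν q.2.1 * (kk q.2.1 q.1 : ℂ)) * (cc ν q.2.2 * (kk q.2.2 (-q.1) : ℂ))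

lemma mem_SS_iff (ξ β γ : ℝ) :
    (ξ, β, γ) ∈ SS ↔ β ∈ Ioo 0 (Real.arccos ξ) ∧ γ ∈ Ioo 0 (Real.arccos (-ξ)) := by
  constructor
  · rintro ⟨⟨hβ0, hβπ⟩, ⟨hγ0, hγπ⟩, ⟨hξl, hξr⟩⟩
    have hcb : Real.cos β < 1 := by
      have := Real.cos_lt_cos_of_nonneg_of_le_pi le_rfl hβπ.le hβ0
      simpa using this
    have hcg : Real.cos γ < 1 := by
      have := Real.cos_lt_cos_of_nonneg_of_le_pi le_rfl hγπ.le hγ0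
      simpa using this
    have hξ1 : ξ < 1 := lt_of_lt_of_le hξr hcb.le
    have hξm1 : -1 < ξ := lt_of_le_of_lt (by linarith) hξl
    refine ⟨⟨hβ0, ?_⟩, ⟨hγ0, ?_⟩⟩
    · by_contra hle
      push_neg at hle
      have : Real.cos β ≤ Real.cos (Real.arccos ξ) :=
        Real.cos_le_cos_of_nonneg_of_le_pi (Real.arccos_nonneg ξ) hβπ.le hle
      rw [Real.cos_arccos hξm1.le hξ1.le] at this
      linarith
    · by_contra hle
      push_neg at hle
      have : Real.cos γ ≤ Real.cos (Real.arccos (-ξ)) :=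
        Real.cos_le_cos_of_nonneg_of_le_pi (Real.arccos_nonneg (-ξ)) hγπ.le hle
      rw [Real.cos_arccos (by linarith) (by linarith)] at this
      linarith
  · rintro ⟨⟨hβ0, hβa⟩, ⟨hγ0, hγa⟩⟩
    have hβπ : β < π := lt_of_lt_of_le hβa (Real.arccos_le_pi ξ)
    have hγπ : γ < π := lt_of_lt_of_le hγa (Real.arccos_le_pi (-ξ))
    -- ξ ∈ [-1, 1] forced, else arccos degenerate
    have hξ1 : ξ ≤ 1 := by
      by_contra h
      push_neg at h
      rw [Real.arccos_eq_zero.2 h.le] at hβa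
      linarith
    have hξm1 : -1 ≤ ξ := by
      by_contra h
      push_neg at h
      rw [Real.arccos_eq_zero.2 (by linarith : (1:ℝ) ≤ -ξ)] at hγa
      linarith
    refine ⟨⟨hβ0, hβπ⟩, ⟨hγ0, hγπ⟩, ?_, ?_⟩
    · have := Real.cos_lt_cos_of_nonneg_of_le_pi hγ0.le (Real.arccos_le_pi (-ξ)) hγa
      rw [Real.cos_arccos (by linarith) (by linarith)] at this
      linarith
    · have := Real.cos_lt_cos_of_nonneg_of_le_pi hβ0.le (Real.arccos_le_pi ξ) hβa
      rw [Real.cos_arccos hξm1 hξ1] at this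
      linarith

lemma legendre_eq (ν : ℂ) (ξ : ℝ) :
    legendreP ν ξ = (2/(π:ℂ)) * ∫ β in Ioo 0 (Real.arccos ξ), cc ν β * (kk β ξ : ℂ) := by
  unfold legendreP
  rw [intervalIntegral.integral_of_le (Real.arccos_nonneg ξ), integral_Ioc_eq_integral_Ioo]
  congr 1
  refine setIntegral_congr_fun measurableSet_Ioo fun β _ => ?_
  rw [cc, kk, Complex.ofReal_inv, div_eq_mul_inv]

lemma claimA (ν : ℂ) (ξ : ℝ) :
    legendreP ν ξ * legendreP ν (-ξ)
      = (2/(π:ℂ))^2 * ∫ p : ℝ × ℝ, FF ν (ξ, p.1, p.2) := by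
  rw [legendre_eq, legendre_eq]
  have : ∀ A B : ℂ, (2/(π:ℂ) * A) * (2/(π:ℂ) * B) = (2/(π:ℂ))^2 * (A * B) := by
    intros; ring
  rw [this]
  congr 1
  rw [← MeasureTheory.setIntegral_prod_mul, ← MeasureTheory.Measure.volume_eq_prod,
    ← MeasureTheory.integral_indicator (measurableSet_Ioo.prod measurableSet_Ioo)]
  refine integral_congr_ae (Filter.Eventually.of_forall fun p => ?_)
  by_cases h : (ξ, p.1, p.2) ∈ SS
  · have hp : p ∈ Ioo 0 (Real.arccos ξ) ×ˢ Ioo 0 (Real.arccos (-ξ)) := by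
      rcases (mem_SS_iff ξ p.1 p.2).1 h with ⟨h1, h2⟩
      exact ⟨h1, h2⟩
    simp only [Set.indicator_of_mem hp, FF, Set.indicator_of_mem h]
  · have hp : p ∉ Ioo 0 (Real.arccos ξ) ×ˢ Ioo 0 (Real.arccos (-ξ)) := by
      intro hp
      exact h ((mem_SS_iff ξ p.1 p.2).2 ⟨hp.1, hp.2⟩)
    simp only [Set.indicator_of_notMem hp, FF, Set.indicator_of_notMem h]

noncomputable def G0 : ℝ × ℝ × ℝ → ℝ :=
  SS.indicator fun q => kk q.2.1 q.1 * kk q.2.2 (-q.1)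

lemma kk_measurable : Measurable fun q : ℝ × ℝ × ℝ => kk q.2.1 q.1 * kk q.2.2 (-q.1) := by
  apply Measurable.mul
  · exact ((Real.continuous_sqrt.comp (by fun_prop)).measurable).inv
  · exact ((Real.continuous_sqrt.comp (by fun_prop)).measurable).inv

lemma G0_nonneg (q : ℝ × ℝ × ℝ) : 0 ≤ G0 q := by
  apply Set.indicator_nonneg
  exact fun q _ => mul_nonneg (kk_nonneg _ _) (kk_nonneg _ _)

lemma G0_measurable : Measurable G0 := kk_measurable.indicator measurableSet_SS

lemma G0_section (p : ℝ × ℝ) (hp : p ∈ Ioo 0 π ×ˢ Ioo 0 π) (ξ : ℝ) :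
    G0 (ξ, p.1, p.2)
      = (Ioo (-Real.cos p.2) (Real.cos p.1)).indicator
          (fun ξ => kk p.1 ξ * kk p.2 (-ξ)) ξ := by
  by_cases h : ξ ∈ Ioo (-Real.cos p.2) (Real.cos p.1)
  · rw [Set.indicator_of_mem h, G0,
      Set.indicator_of_mem (show (ξ, p.1, p.2) ∈ SS from ⟨hp.1, hp.2, h.1, h.2⟩)]
  · rw [Set.indicator_of_notMem h, G0,
      Set.indicator_of_notMem (fun hS => h ⟨hS.2.2.1, hS.2.2.2⟩)]

lemma G0_zero_of_not_box (p : ℝ × ℝ) (hp : p ∉ Ioo 0 π ×ˢ Ioo 0 π) (ξ : ℝ) :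
    G0 (ξ, p.1, p.2) = 0 := by
  rw [G0, Set.indicator_of_notMem]
  intro hS
  exact hp ⟨hS.1, hS.2.1⟩

lemma G0_hasFiniteIntegral : HasFiniteIntegral G0 := by
  rw [MeasureTheory.hasFiniteIntegral_iff_ofReal
    (Filter.Eventually.of_forall G0_nonneg)]
  rw [MeasureTheory.Measure.volume_eq_prod]
  rw [MeasureTheory.lintegral_prod_symm]
  swap
  · exact (ENNReal.measurable_ofReal.comp G0_measurable).aemeasurable
  calc ∫⁻ p : ℝ × ℝ, ∫⁻ ξ : ℝ, ENNReal.ofReal (G0 (ξ, p))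
      ≤ ∫⁻ p : ℝ × ℝ, (Ioo 0 π ×ˢ Ioo 0 π).indicator
          (fun _ => ENNReal.ofReal (π/2)) p := by
        apply lintegral_mono
        intro p
        by_cases hp : p ∈ Ioo 0 π ×ˢ Ioo 0 π
        · rw [Set.indicator_of_mem hp]
          have : ∀ ξ, ENNReal.ofReal (G0 (ξ, p))
              = (Ioo (-Real.cos p.2) (Real.cos p.1)).indicator
                (fun ξ => ENNReal.ofReal (kk p.1 ξ * kk p.2 (-ξ))) ξ := by
            intro ξ
            rw [G0_section p hp ξ]
            by_cases h : ξ ∈ Ioo (-Real.cos p.2) (Real.cos p.1)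
            · rw [Set.indicator_of_mem h, Set.indicator_of_mem h]
            · rw [Set.indicator_of_notMem h, Set.indicator_of_notMem h,
                ENNReal.ofReal_zero]
          simp_rw [this]
          rw [lintegral_indicator measurableSet_Ioo]
          by_cases hlt : -Real.cos p.2 < Real.cos p.1
          · rw [kk_lintegral hlt]
          · rw [Set.Ioo_eq_empty hlt]
            simp
        · rw [Set.indicator_of_notMem hp]
          have : ∀ ξ, ENNReal.ofReal (G0 (ξ, p)) = 0 := fun ξ => by
            rw [G0_zero_of_not_box p hp ξ, ENNReal.ofReal_zero]
          simp_rw [this]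
          simp
    _ < ⊤ := by
        rw [lintegral_indicator (measurableSet_Ioo.prod measurableSet_Ioo)]
        rw [MeasureTheory.setLIntegral_const]
        rw [MeasureTheory.Measure.volume_eq_prod, MeasureTheory.Measure.prod_prod]
        simp [Real.volume_Ioo]
        exact ENNReal.mul_lt_top ENNReal.ofReal_lt_top
          (ENNReal.mul_lt_top ENNReal.ofReal_lt_top ENNReal.ofReal_lt_top)

lemma G0_integrable : Integrable G0 :=
  ⟨G0_measurable.aestronglyMeasurable, G0_hasFiniteIntegral⟩

lemma FF_measurable (ν : ℂ) : Measurable (FF ν) := by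
  apply Measurable.indicator _ measurableSet_SS
  apply Measurable.mul
  · exact (Complex.continuous_cos.comp (by fun_prop)).measurable.mul
      (Complex.continuous_ofReal.measurable.comp
        ((Real.continuous_sqrt.comp (by fun_prop)).measurable).inv)
  · exact (Complex.continuous_cos.comp (by fun_prop)).measurable.mul
      (Complex.continuous_ofReal.measurable.comp
        ((Real.continuous_sqrt.comp (by fun_prop)).measurable).inv)

lemma FF_integrable (ν : ℂ) : Integrable (FF ν) := by
  obtain ⟨C, hC⟩ := (isCompact_Icc (a := (0:ℝ)) (b := π)).exists_bound_of_continuousOn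
    ((Complex.continuous_cos.comp (by fun_prop : Continuous fun y : ℝ =>
      (2*ν+1) * (y:ℂ) / 2)).continuousOn (s := Icc 0 π))
  have hC0 : 0 ≤ C := le_trans (norm_nonneg _) (hC 0 ⟨le_rfl, Real.pi_pos.le⟩)
  apply Integrable.mono' (G0_integrable.const_mul (C * C))
    (FF_measurable ν).aestronglyMeasurable
  apply Filter.Eventually.of_forall
  intro q
  by_cases h : q ∈ SS
  · rw [FF, Set.indicator_of_mem h, G0, Set.indicator_of_mem h]
    obtain ⟨⟨hβ0, hβπ⟩, ⟨hγ0, hγπ⟩, _⟩ := h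
    have h1 : ‖cc ν q.2.1‖ ≤ C := hC q.2.1 ⟨hβ0.le, hβπ.le⟩
    have h2 : ‖cc ν q.2.2‖ ≤ C := hC q.2.2 ⟨hγ0.le, hγπ.le⟩
    have e1 : ‖(kk q.2.1 q.1 : ℂ)‖ = kk q.2.1 q.1 := by
      rw [Complex.norm_real, Real.norm_of_nonneg (kk_nonneg _ _)]
    have e2 : ‖(kk q.2.2 (-q.1) : ℂ)‖ = kk q.2.2 (-q.1) := by
      rw [Complex.norm_real, Real.norm_of_nonneg (kk_nonneg _ _)]
    rw [norm_mul, norm_mul, norm_mul, e1, e2]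
    have k1 := kk_nonneg q.2.1 q.1
    have k2 := kk_nonneg q.2.2 (-q.1)
    calc ‖cc ν q.2.1‖ * kk q.2.1 q.1 * (‖cc ν q.2.2‖ * kk q.2.2 (-q.1))
        ≤ C * kk q.2.1 q.1 * (C * kk q.2.2 (-q.1)) := by
          apply mul_le_mul (mul_le_mul_of_nonneg_right h1 k1)
            (mul_le_mul_of_nonneg_right h2 k2)
            (mul_nonneg (norm_nonneg _) k2)
            (mul_nonneg hC0 k1)
      _ = C * C * (kk q.2.1 q.1 * kk q.2.2 (-q.1)) := by ring
  · rw [FF, Set.indicator_of_notMem h, G0, Set.indicator_of_notMem h]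
    simp [hC0]

lemma cos_integral (μ : ℂ) (hμ : μ ≠ 0) (T : ℝ) :
    ∫ γ in (0:ℝ)..T, Complex.cos (μ * γ / 2) = (2/μ) * Complex.sin (μ * T / 2) := by
  have h : ∀ x : ℝ, HasDerivAt (fun t : ℝ => (2/μ) * Complex.sin (μ * t / 2))
      (Complex.cos (μ * x / 2)) x := by
    intro x
    have h2 : HasDerivAt (fun z : ℂ => μ * z / 2) (μ/2) (x:ℂ) := by
      simpa using ((hasDerivAt_id (x:ℂ)).const_mul μ).div_const 2
    have h3 := (Complex.hasDerivAt_sin (μ * (x:ℂ) / 2)).comp (x:ℂ) h2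
    have h4 := h3.const_mul (2/μ)
    have h5 : (2/μ) * (Complex.cos (μ * (x:ℂ)/2) * (μ/2)) = Complex.cos (μ * (x:ℂ)/2) := by
      field_simp
    rw [h5] at h4
    exact h4.comp_ofReal
  rw [intervalIntegral.integral_eq_sub_of_hasDerivAt (fun x _ => h x)
    ((Complex.continuous_cos.comp (by fun_prop)).intervalIntegrable 0 T)]
  simp

lemma outer_integral (μ : ℂ) (hμ : μ ≠ 0) :
    ∫ β in (0:ℝ)..π, Complex.cos (μ * β / 2) * ((2/μ) * Complex.sin (μ * ((π:ℂ) - (β:ℂ)) / 2))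
      = ((π:ℂ)/μ) * Complex.sin (μ * (π:ℂ) / 2) := by
  set P : ℂ := μ * (π:ℂ) / 2 with hP
  have key : ∀ β : ℝ, Complex.cos (μ * β / 2) * ((2/μ) * Complex.sin (μ * ((π:ℂ) - (β:ℂ)) / 2))
      = (1/μ) * (Complex.sin P + Complex.sin (P - μ * β)) := by
    intro β
    have e : (μ * ((π:ℂ) - (β:ℂ)) / 2 : ℂ) = P - μ * β / 2 := by
      push_cast; rw [hP]; ring
    rw [e, Complex.sin_sub, Complex.sin_sub P (μ * β),
      show (μ * (β:ℂ)) = 2 * (μ * β / 2) by ring,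
      Complex.sin_two_mul, Complex.cos_two_mul]
    field_simp
    ring
  have hG : ∀ x : ℝ, HasDerivAt
      (fun t : ℝ => (1/μ) * (Complex.sin P * t + Complex.cos (P - μ * t)/μ))
      ((1/μ) * (Complex.sin P + Complex.sin (P - μ * x))) x := by
    intro x
    have h1 : HasDerivAt (fun z : ℂ => P - μ * z) (-μ) (x:ℂ) := by
      simpa using ((hasDerivAt_id (x:ℂ)).const_mul μ).const_sub P
    have h2 := ((Complex.hasDerivAt_cos (P - μ * (x:ℂ))).comp (x:ℂ) h1).div_const μ
    have h3 : HasDerivAt (fun z : ℂ => Complex.sin P * z) (Complex.sin P) (x:ℂ) := by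
      simpa using (hasDerivAt_id (x:ℂ)).const_mul (Complex.sin P)
    have h4 := (h3.add h2).const_mul (1/μ)
    have e : (1/μ) * (Complex.sin P + -Complex.sin (P - μ*(x:ℂ)) * (-μ) / μ)
        = (1/μ) * (Complex.sin P + Complex.sin (P - μ * (x:ℂ))) := by
      field_simp
    rw [e] at h4
    exact h4.comp_ofReal
  rw [intervalIntegral.integral_congr (fun β _ => key β)]
  rw [intervalIntegral.integral_eq_sub_of_hasDerivAt (fun x _ => hG x)
    ((by fun_prop : Continuous fun x : ℝ =>
        (1/μ) * (Complex.sin P + Complex.sin (P - μ * x))).intervalIntegrable 0 π)]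
  have e1 : P - μ * ((π:ℝ):ℂ) = -P := by rw [hP]; push_cast; ring
  have e2 : P - μ * ((0:ℝ):ℂ) = P := by push_cast; ring
  rw [e1, e2, Complex.cos_neg]
  push_cast
  field_simp
  ring

lemma integral_cplx_ofReal {μ : Measure ℝ} (f : ℝ → ℝ) :
    ∫ x, ((f x : ℝ) : ℂ) ∂μ = ((∫ x, f x ∂μ : ℝ) : ℂ) := by
  exact integral_ofReal

def TT : Set (ℝ × ℝ) := (Ioo 0 π ×ˢ Ioo 0 π) ∩ {p | -Real.cos p.2 < Real.cos p.1}

lemma claimB (ν : ℂ) (p : ℝ × ℝ) :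
    ∫ ξ : ℝ, FF ν (ξ, p.1, p.2)
      = ((π:ℂ)/2) * TT.indicator (fun p => cc ν p.1 * cc ν p.2) p := by
  by_cases hp : p ∈ Ioo 0 π ×ˢ Ioo 0 π
  · have sect : ∀ ξ : ℝ, FF ν (ξ, p.1, p.2)
        = (Ioo (-Real.cos p.2) (Real.cos p.1)).indicator
            (fun ξ => (cc ν p.1 * cc ν p.2) * ((kk p.1 ξ * kk p.2 (-ξ) : ℝ) : ℂ)) ξ := by
      intro ξ
      by_cases h : ξ ∈ Ioo (-Real.cos p.2) (Real.cos p.1)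
      · rw [Set.indicator_of_mem h, FF,
          Set.indicator_of_mem (show (ξ, p.1, p.2) ∈ SS from ⟨hp.1, hp.2, h.1, h.2⟩)]
        push_cast
        ring
      · rw [Set.indicator_of_notMem h, FF,
          Set.indicator_of_notMem (fun hS => h ⟨hS.2.2.1, hS.2.2.2⟩)]
    simp_rw [sect]
    rw [MeasureTheory.integral_indicator measurableSet_Ioo,
      MeasureTheory.integral_const_mul,
      integral_cplx_ofReal]
    by_cases hlt : -Real.cos p.2 < Real.cos p.1
    · rw [kk_setIntegral hlt, Set.indicator_of_mem (show p ∈ TT from ⟨hp, hlt⟩)]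
      push_cast
      ring
    · rw [Set.Ioo_eq_empty hlt, Set.indicator_of_notMem (fun hT : p ∈ TT => hlt hT.2)]
      simp
  · have : ∀ ξ : ℝ, FF ν (ξ, p.1, p.2) = 0 := by
      intro ξ
      rw [FF, Set.indicator_of_notMem (fun hS => hp ⟨hS.1, hS.2.1⟩)]
    simp_rw [this]
    rw [Set.indicator_of_notMem (fun hT : p ∈ TT => hp hT.1)]
    simp





lemma measurableSet_TT : MeasurableSet TT :=
  (measurableSet_Ioo.prod measurableSet_Ioo).inter
    (measurableSet_lt (Real.continuous_cos.comp continuous_snd).neg.measurable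
      (Real.continuous_cos.comp continuous_fst).measurable)

lemma TTind_integrable (ν : ℂ) :
    Integrable (TT.indicator fun p : ℝ × ℝ => cc ν p.1 * cc ν p.2) := by
  obtain ⟨C, hC⟩ := (isCompact_Icc (a := (0:ℝ)) (b := π)).exists_bound_of_continuousOn
    ((Complex.continuous_cos.comp (by fun_prop : Continuous fun y : ℝ =>
      (2*ν+1) * (y:ℂ) / 2)).continuousOn (s := Icc 0 π))
  have hC0 : 0 ≤ C := le_trans (norm_nonneg _) (hC 0 ⟨le_rfl, Real.pi_pos.le⟩)
  have hbox : Integrable ((Ioo 0 π ×ˢ Ioo 0 π).indicator fun _ : ℝ × ℝ => C * C) := by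
    rw [MeasureTheory.integrable_indicator_iff (measurableSet_Ioo.prod measurableSet_Ioo)]
    refine MeasureTheory.integrableOn_const (ne_of_lt ?_)
    rw [MeasureTheory.Measure.volume_eq_prod, MeasureTheory.Measure.prod_prod]
    simp [Real.volume_Ioo]
    exact ENNReal.mul_lt_top ENNReal.ofReal_lt_top ENNReal.ofReal_lt_top
  apply Integrable.mono' hbox
  · apply AEStronglyMeasurable.indicator _ measurableSet_TT
    exact ((Complex.continuous_cos.comp (by fun_prop)).mul
      (Complex.continuous_cos.comp (by fun_prop))).aestronglyMeasurable
  · apply Filter.Eventually.of_forall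
    intro p
    by_cases h : p ∈ TT
    · rw [Set.indicator_of_mem h, Set.indicator_of_mem h.1, norm_mul]
      exact mul_le_mul (hC p.1 ⟨h.1.1.1.le, h.1.1.2.le⟩) (hC p.2 ⟨h.1.2.1.le, h.1.2.2.le⟩)
        (norm_nonneg _) hC0
    · rw [Set.indicator_of_notMem h]
      by_cases hb : p ∈ Ioo 0 π ×ˢ Ioo 0 π
      · rw [Set.indicator_of_mem hb]; simpa using mul_nonneg hC0 hC0
      · rw [Set.indicator_of_notMem hb]; simp

theorem int_P_Pneg (ν : ℂ) (hν : ν ≠ -1/2) :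
    ∫ ξ in (-1 : ℝ)..1, legendreP ν ξ * legendreP ν (-ξ)
      = 2 * Complex.cos (ν * π) / (2 * ν + 1) := by
  have hμ : (2*ν+1 : ℂ) ≠ 0 := by
    intro h
    apply hν
    linear_combination h / 2
  have hπ : ((π:ℝ) : ℂ) ≠ 0 := Complex.ofReal_ne_zero.2 Real.pi_ne_zero
  have e1 : ∫ ξ in (-1:ℝ)..1, legendreP ν ξ * legendreP ν (-ξ)
      = ∫ ξ in (-1:ℝ)..1, (2/(π:ℂ))^2 * ∫ p : ℝ × ℝ, FF ν (ξ, p.1, p.2) :=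
    intervalIntegral.integral_congr fun ξ _ => claimA ν ξ
  rw [e1, intervalIntegral.integral_const_mul,
    intervalIntegral.integral_of_le (by norm_num : (-1:ℝ) ≤ 1)]
  have hvanish : ∀ ξ : ℝ, ξ ∉ Ioc (-1:ℝ) 1 → (∫ p : ℝ × ℝ, FF ν (ξ, p.1, p.2)) = 0 := by
    intro ξ hξ
    have hz : ∀ p : ℝ × ℝ, FF ν (ξ, p.1, p.2) = 0 := by
      intro p
      rw [FF, Set.indicator_of_notMem]
      rintro ⟨⟨hb0, hbp⟩, ⟨hg0, hgp⟩, hl, hr⟩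
      have h1 : Real.cos p.1 < 1 := by
        simpa using Real.cos_lt_cos_of_nonneg_of_le_pi le_rfl hbp.le hb0
      have h2 : Real.cos p.2 < 1 := by
        simpa using Real.cos_lt_cos_of_nonneg_of_le_pi le_rfl hgp.le hg0
      exact hξ ⟨by linarith, by linarith⟩
    simp only [hz]
    simp
  rw [MeasureTheory.setIntegral_eq_integral_of_forall_compl_eq_zero hvanish]
  have hswap : (∫ ξ : ℝ, ∫ p : ℝ × ℝ, FF ν (ξ, p.1, p.2))
      = ∫ p : ℝ × ℝ, ∫ ξ : ℝ, FF ν (ξ, p.1, p.2) := by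
    have h := FF_integrable ν
    rw [MeasureTheory.Measure.volume_eq_prod] at h
    exact MeasureTheory.integral_integral_swap h
  rw [hswap]
  have e2 : (∫ p : ℝ × ℝ, ∫ ξ : ℝ, FF ν (ξ, p.1, p.2))
      = ((π:ℂ)/2) * ∫ p : ℝ × ℝ, TT.indicator (fun p => cc ν p.1 * cc ν p.2) p := by
    rw [← MeasureTheory.integral_const_mul]
    exact integral_congr_ae (Filter.Eventually.of_forall fun p => claimB ν p)
  rw [e2]
  have e3 : (∫ p : ℝ × ℝ, TT.indicator (fun p => cc ν p.1 * cc ν p.2) p)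
      = ∫ β : ℝ, ∫ γ : ℝ, TT.indicator (fun p => cc ν p.1 * cc ν p.2) (β, γ) := by
    rw [MeasureTheory.Measure.volume_eq_prod]
    apply MeasureTheory.integral_prod
    rw [← MeasureTheory.Measure.volume_eq_prod]
    exact TTind_integrable ν
  rw [e3]
  have e4 : ∀ β : ℝ, (∫ γ : ℝ, TT.indicator (fun p => cc ν p.1 * cc ν p.2) (β, γ))
      = (Ioo 0 π).indicator (fun β : ℝ => Complex.cos ((2*ν+1) * (β:ℂ) / 2) *
          ((2/(2*ν+1)) * Complex.sin ((2*ν+1) * ((π:ℂ) - (β:ℂ)) / 2))) β := by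
    intro β
    by_cases hβ : β ∈ Ioo 0 π
    · have hsec : ∀ γ : ℝ, TT.indicator (fun p => cc ν p.1 * cc ν p.2) (β, γ)
          = (Ioo 0 (π - β)).indicator (fun γ => cc ν β * cc ν γ) γ := by
        intro γ
        by_cases h : γ ∈ Ioo 0 (π - β)
        · have hmem : (β, γ) ∈ TT := by
            refine ⟨⟨hβ, h.1, by linarith [h.2, hβ.1]⟩, ?_⟩
            have : Real.cos (π - γ) < Real.cos β := by
              apply Real.cos_lt_cos_of_nonneg_of_le_pi hβ.1.le
              · linarith [h.1]
              · linarith [h.2]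
            rw [Real.cos_pi_sub] at this
            exact this
          rw [Set.indicator_of_mem h, Set.indicator_of_mem hmem]
        · rw [Set.indicator_of_notMem h, Set.indicator_of_notMem]
          rintro ⟨⟨_, hγ0, hγπ⟩, hlt⟩
          apply h
          refine ⟨hγ0, ?_⟩
          by_contra hge
          push_neg at hge
          have : Real.cos β ≤ Real.cos (π - γ) := by
            apply Real.cos_le_cos_of_nonneg_of_le_pi (by linarith [hγπ]) hβ.2.le
            linarith
          rw [Real.cos_pi_sub] at this
          simp only [Set.mem_setOf_eq] at hlt
          linarith
      simp_rw [hsec]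
      rw [MeasureTheory.integral_indicator measurableSet_Ioo,
        MeasureTheory.integral_const_mul, Set.indicator_of_mem hβ,
        ← integral_Ioc_eq_integral_Ioo,
        ← intervalIntegral.integral_of_le (by linarith [hβ.2] : (0:ℝ) ≤ π - β)]
      have : ∫ γ in (0:ℝ)..(π - β), cc ν γ
          = (2/(2*ν+1)) * Complex.sin ((2*ν+1) * ((π:ℂ) - (β:ℂ)) / 2) := by
        rw [show (fun γ : ℝ => cc ν γ) = fun γ : ℝ => Complex.cos ((2*ν+1) * (γ:ℂ) / 2) from rfl]
        rw [cos_integral (2*ν+1) hμ (π - β)]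
        push_cast
        ring
      rw [this, cc]
    · rw [Set.indicator_of_notMem hβ]
      have : ∀ γ : ℝ, TT.indicator (fun p => cc ν p.1 * cc ν p.2) (β, γ) = 0 := by
        intro γ
        exact Set.indicator_of_notMem (fun hT => hβ hT.1.1) _
      simp only [this]
      simp
  simp_rw [e4]
  rw [MeasureTheory.integral_indicator measurableSet_Ioo,
    ← integral_Ioc_eq_integral_Ioo,
    ← intervalIntegral.integral_of_le Real.pi_pos.le,
    outer_integral (2*ν+1) hμ]
  have hsin : Complex.sin ((2*ν+1) * (π:ℂ) / 2) = Complex.cos (ν * (π:ℂ)) := by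
    rw [show (2*ν+1) * (π:ℂ) / 2 = ν * (π:ℂ) + (π:ℂ)/2 by ring]
    exact Complex.sin_add_pi_div_two _
  rw [hsin]
  field_simp

end MehlerAux
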